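/- A conditional expectation preserving system (E, T, S, e) is conditionally weak mixing if and only if (1/n)·∑_{k=0}^{n-1} |T((S^k f)·g) − Tf·Tg| → 0 in order as n → ∞ for all f, g in the ideal E_e generated by e. -/

import Mathlib

open Finset

section Defs

variable {E : Type*} [ConditionallyCompleteLattice E] [AddCommGroup E] [Module ℝ E]
  [CovariantClass E E (· + ·) (· ≤ ·)]

/-- Order convergence of a sequence: there is a sequence `u ↓ 0` dominating the tails. -/
def OrderConvergesTo (f : ℕ → E) (x : E) : Prop :=
  ∃ u : ℕ → E, Antitone u ∧ IsGLB (Set.range u) (0 : E) ∧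
    ∀ m : ℕ, ∃ N : ℕ, ∀ n ≥ N, |f n - x| ≤ u m

/-- `p` is a component of `e`. -/
def IsComponent (e p : E) : Prop := 0 ≤ p ∧ p ≤ e ∧ p ⊓ (e - p) = 0

/-- A sequence of components is of density zero if its Cesàro means order converge to `0`. -/
def DensityZero (p : ℕ → E) : Prop :=
  OrderConvergesTo (fun n => (n : ℝ)⁻¹ • ∑ k ∈ Finset.range n, p k) (0 : E)

/-- The band projection (onto the band generated by `p`) applied to a positive element `f`. -/
noncomputable def bandProj (p f : E) : E :=
  sSup (Set.range fun n : ℕ => f ⊓ (n : ℝ) • p)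

end Defs

section Systems

variable (E : Type*) [ConditionallyCompleteLattice E] [AddCommGroup E] [Module ℝ E]
  [CovariantClass E E (· + ·) (· ≤ ·)]

/-- The data of a conditional expectation preserving system, without the
intertwining identity `T S = T`: a Dedekind complete Riesz space with weak order unit `e`,
the `f`-algebra multiplication of `E_e` (with unit `e`), a strictly-positive-free
conditional expectation operator `T` with `T e = e`, and a Riesz homomorphism `S`
with `S e = e`. -/
structure PreCEPS where
  e : E
  e_pos : 0 < e
  weakUnit : ∀ x : E, e ⊓ |x| = 0 → x = 0
  /-- the `f`-algebra multiplication (of the ideal generated by `e`) -/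
  mul : E →ₗ[ℝ] E →ₗ[ℝ] E
  mul_comm' : ∀ x y, mul x y = mul y x
  mul_pos' : ∀ x y, 0 ≤ x → 0 ≤ y → 0 ≤ mul x y
  one_mul' : ∀ x, mul e x = x
  finf' : ∀ x y z, x ⊓ y = 0 → 0 ≤ z → (mul x z) ⊓ y = 0
  /-- the conditional expectation operator -/
  T : E →ₗ[ℝ] E
  T_pos : ∀ x, 0 ≤ x → 0 ≤ T x
  T_proj : ∀ x, T (T x) = T x
  T_e : T e = e
  T_oc : ∀ (s : Set E) (x : E), s.Nonempty → DirectedOn (· ≤ ·) s → IsLUB s x →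
    IsLUB (T '' s) (T x)
  T_range_closed : ∀ (s : Set E) (x : E), (∀ y ∈ s, T y = y) → IsLUB s x → T x = x
  /-- the Riesz homomorphism -/
  S : E →ₗ[ℝ] E
  S_sup : ∀ x y, S (x ⊔ y) = S x ⊔ S y
  S_e : S e = e

/-- A conditional expectation preserving system. -/
structure CEPS extends PreCEPS E where
  TS : ∀ x, T (S x) = T x

variable {E}

/-- Strict positivity of the conditional expectation operator of a system. -/
def CEPS.StrictPos (A : CEPS E) : Prop := ∀ x : E, 0 ≤ x → A.T x = 0 → x = 0

/-- Ergodicity, characterised by Cesàro convergence of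
`T((S^k p)·q)` to `Tp·Tq` for all components `p, q` of `e`. -/
def CEPS.Ergodic (A : CEPS E) : Prop :=
  ∀ p q : E, IsComponent A.e p → IsComponent A.e q →
    OrderConvergesTo
      (fun n => (n : ℝ)⁻¹ • ∑ k ∈ Finset.range n, A.T (A.mul ((A.S ^ k) p) q))
      (A.mul (A.T p) (A.T q))

/-- Conditional weak mixing. -/
def CEPS.WeakMixing (A : CEPS E) : Prop :=
  ∀ p q : E, IsComponent A.e p → IsComponent A.e q →
    OrderConvergesTo
      (fun n => (n : ℝ)⁻¹ • ∑ k ∈ Finset.range n,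
        |A.T (A.mul ((A.S ^ k) p) q) - A.mul (A.T p) (A.T q)|) (0 : E)

end Systems

section Tensor

variable {E F G : Type*}
  [ConditionallyCompleteLattice E] [AddCommGroup E] [Module ℝ E]
  [CovariantClass E E (· + ·) (· ≤ ·)]
  [ConditionallyCompleteLattice F] [AddCommGroup F] [Module ℝ F]
  [CovariantClass F F (· + ·) (· ≤ ·)]
  [ConditionallyCompleteLattice G] [AddCommGroup G] [Module ℝ G]
  [CovariantClass G G (· + ·) (· ≤ ·)]

/-- A realisation of the Dedekind completion of the Fremlin tensor product of the
underlying spaces of two conditional expectation preserving systems, carrying the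
pre-system structure (Grobler's tensor product conditional expectation and the tensor
product Riesz homomorphism), but without the intertwining identity for the product. -/
structure TensorPreCEPS (A : CEPS E) (B : CEPS F) (G : Type*)
    [ConditionallyCompleteLattice G] [AddCommGroup G] [Module ℝ G]
    [CovariantClass G G (· + ·) (· ≤ ·)] where
  sys : PreCEPS G
  tmul : E →ₗ[ℝ] F →ₗ[ℝ] G
  tmul_pos : ∀ x y, 0 ≤ x → 0 ≤ y → 0 ≤ tmul x y
  e_def : sys.e = tmul A.e B.e
  T_tmul : ∀ x y, sys.T (tmul x y) = tmul (A.T x) (B.T y)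
  S_tmul : ∀ x y, sys.S (tmul x y) = tmul (A.S x) (B.S y)
  mul_tmul : ∀ x y x' y',
    sys.mul (tmul x y) (tmul x' y') = tmul (A.mul x x') (B.mul y y')
  comp_dense : ∀ u : G, IsComponent sys.e u →
    IsLUB {w : G | ∃ p q, IsComponent A.e p ∧ IsComponent B.e q ∧
      tmul p q ≤ u ∧ w = tmul p q} u
  tmul_oc_left : ∀ (x : ℕ → E) (a : E) (y : F), 0 ≤ y →
    OrderConvergesTo x a → OrderConvergesTo (fun n => tmul (x n) y) (tmul a y)
  tmul_oc_right : ∀ (x : E) (y : ℕ → F) (b : F), 0 ≤ x →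
    OrderConvergesTo y b → OrderConvergesTo (fun n => tmul x (y n)) (tmul x b)

/-- As `TensorPreCEPS`, but where the tensor product system is a full conditional
expectation preserving system. -/
structure TensorCEPS (A : CEPS E) (B : CEPS F) (G : Type*)
    [ConditionallyCompleteLattice G] [AddCommGroup G] [Module ℝ G]
    [CovariantClass G G (· + ·) (· ≤ ·)] where
  sys : CEPS G
  tmul : E →ₗ[ℝ] F →ₗ[ℝ] G
  tmul_pos : ∀ x y, 0 ≤ x → 0 ≤ y → 0 ≤ tmul x y
  e_def : sys.e = tmul A.e B.e
  T_tmul : ∀ x y, sys.T (tmul x y) = tmul (A.T x) (B.T y)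
  S_tmul : ∀ x y, sys.S (tmul x y) = tmul (A.S x) (B.S y)
  mul_tmul : ∀ x y x' y',
    sys.mul (tmul x y) (tmul x' y') = tmul (A.mul x x') (B.mul y y')
  comp_dense : ∀ u : G, IsComponent sys.e u →
    IsLUB {w : G | ∃ p q, IsComponent A.e p ∧ IsComponent B.e q ∧
      tmul p q ≤ u ∧ w = tmul p q} u
  tmul_oc_left : ∀ (x : ℕ → E) (a : E) (y : F), 0 ≤ y →
    OrderConvergesTo x a → OrderConvergesTo (fun n => tmul (x n) y) (tmul a y)
  tmul_oc_right : ∀ (x : E) (y : ℕ → F) (b : F), 0 ≤ x →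
    OrderConvergesTo y b → OrderConvergesTo (fun n => tmul x (y n)) (tmul x b)

end Tensor

set_option linter.unusedSectionVars false
set_option linter.unusedVariables false

section Aux2
variable {E : Type*} [ConditionallyCompleteLattice E] [AddCommGroup E] [Module ℝ E]
  [CovariantClass E E (· + ·) (· ≤ ·)]

lemma wm_abs_le {a b : E} (h1 : a ≤ b) (h2 : -a ≤ b) : |a| ≤ b := sup_le h1 h2

lemma wm_abs_add (a b : E) : |a + b| ≤ |a| + |b| :=
  wm_abs_le (add_le_add (le_abs_self a) (le_abs_self b))
    (by rw [neg_add]; exact add_le_add (neg_le_abs a) (neg_le_abs b))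

lemma wm_abs_sub (a b : E) : |a - b| ≤ |a| + |b| := by
  rw [sub_eq_add_neg]
  exact (wm_abs_add a (-b)).trans (by rw [abs_neg])

lemma wm_abs_sum_le {ι : Type*} (s : Finset ι) (F : ι → E) :
    |∑ i ∈ s, F i| ≤ ∑ i ∈ s, |F i| := by
  classical
  induction s using Finset.induction with
  | empty => simp
  | insert _ _ hns ih =>
    rw [Finset.sum_insert hns, Finset.sum_insert hns]
    exact (wm_abs_add _ _).trans (add_le_add_right ih _)

lemma wm_sum_le_sum {ι : Type*} {s : Finset ι} {f g : ι → E} (h : ∀ i ∈ s, f i ≤ g i) :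
    ∑ i ∈ s, f i ≤ ∑ i ∈ s, g i := by
  classical
  induction s using Finset.induction with
  | empty => simp
  | @insert a s hns ih =>
    rw [Finset.sum_insert hns, Finset.sum_insert hns]
    exact add_le_add (h a (Finset.mem_insert_self a s))
      (ih fun i hi => h i (Finset.mem_insert_of_mem hi))

lemma wm_sum_nonneg {ι : Type*} {s : Finset ι} {f : ι → E} (h : ∀ i ∈ s, 0 ≤ f i) :
    0 ≤ ∑ i ∈ s, f i := by
  have := wm_sum_le_sum (f := fun _ => (0 : E)) (g := f) (s := s) h
  simpa using this

lemma wm_inf_add {a b c : E} (ha : 0 ≤ a) (hb : 0 ≤ b) (hc : 0 ≤ c) :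
    a ⊓ (b + c) ≤ a ⊓ b + a ⊓ c := by
  have h : a ⊓ b + (a ⊓ c) = ((a + a) ⊓ (b + a)) ⊓ ((a + c) ⊓ (b + c)) := by
    rw [add_inf a c (a ⊓ b), inf_add a b a, inf_add a b c]
  rw [h]
  refine le_inf (le_inf ?_ ?_) (le_inf ?_ ?_)
  · exact le_trans inf_le_left (le_add_of_nonneg_right ha)
  · exact le_trans inf_le_left (le_add_of_nonneg_left hb)
  · exact le_trans inf_le_left (le_add_of_nonneg_right hc)
  · exact inf_le_right

lemma wm_inf_sup_le (a b c : E) : (a ⊔ b) ⊓ c ≤ (a ⊓ c) ⊔ (b ⊓ c) := by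
  letI : DistribLattice E := AddCommGroup.toDistribLattice E
  exact (inf_sup_right a b c).le

lemma wm_arch {b W : E} (hb : 0 ≤ b) (h : ∀ n : ℕ, (n : ℝ) • b ≤ W) : b ≤ 0 := by
  have hne : (Set.range fun n : ℕ => (n : ℝ) • b).Nonempty := ⟨_, ⟨0, rfl⟩⟩
  have hbdd : BddAbove (Set.range fun n : ℕ => (n : ℝ) • b) :=
    ⟨W, by rintro x ⟨n, rfl⟩; exact h n⟩
  set s := sSup (Set.range fun n : ℕ => (n : ℝ) • b) with hs
  have key : ∀ n : ℕ, (n : ℝ) • b ≤ s - b := by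
    intro n
    have h1 : ((n + 1 : ℕ) : ℝ) • b ≤ s := le_csSup hbdd ⟨n + 1, rfl⟩
    rw [Nat.cast_succ, add_smul, one_smul] at h1
    exact le_sub_iff_add_le.2 h1
  have h2 : s ≤ s - b := csSup_le hne (by rintro x ⟨n, rfl⟩; exact key n)
  have := sub_nonneg.2 h2
  simpa using this

lemma wm_sup_disjoint {g : ℕ → E} {p t : E} (hp : IsLUB (Set.range g) p)
    (hd : ∀ n, g n ⊓ t = 0) (ht0 : 0 ≤ t) (htp : t ≤ p) : t = 0 := by
  have key : ∀ n, g n ≤ p - t := by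
    intro n
    have h1 : g n + t = g n ⊔ t := by rw [← inf_add_sup, hd n, zero_add]
    have h2 : g n ⊔ t ≤ p := sup_le (hp.1 ⟨n, rfl⟩) htp
    rw [← h1] at h2
    exact le_sub_iff_add_le.2 h2
  have h3 : p ≤ p - t := hp.2 (by rintro x ⟨n, rfl⟩; exact key n)
  have h4 := sub_nonneg.2 h3
  have : t ≤ 0 := by simpa using h4
  exact le_antisymm this ht0


lemma wm_mul_e (A : CEPS E) (x : E) : A.mul x A.e = x := by rw [A.mul_comm']; exact A.one_mul' x

lemma wm_mul_mono_right (A : CEPS E) {x y : E} (z : E) (hz : 0 ≤ z) (h : x ≤ y) :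
    A.mul z x ≤ A.mul z y := by
  have h1 := A.mul_pos' z (y - x) hz (sub_nonneg.2 h)
  rw [map_sub] at h1
  exact sub_nonneg.1 h1

lemma wm_mul_mono_left (A : CEPS E) {x y : E} (z : E) (hz : 0 ≤ z) (h : x ≤ y) :
    A.mul x z ≤ A.mul y z := by
  rw [A.mul_comm' x z, A.mul_comm' y z]; exact wm_mul_mono_right A z hz h

lemma wm_disj_mul (A : CEPS E) {x y : E} (hx : 0 ≤ x) (hy : 0 ≤ y) (h : x ⊓ y = 0) :
    A.mul x y = 0 := by
  have h1 : (A.mul x y) ⊓ y = 0 := A.finf' x y y h hy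
  have h2 : (A.mul y x) ⊓ (A.mul x y) = 0 :=
    A.finf' y (A.mul x y) x (by rw [inf_comm]; exact h1) hx
  rw [A.mul_comm' y x, inf_idem] at h2
  exact h2

lemma wm_sq_nonneg (A : CEPS E) (x : E) : 0 ≤ A.mul x x := by
  have h0 : A.mul x⁺ x⁻ = 0 :=
    wm_disj_mul A (posPart_nonneg x) (negPart_nonneg x) (posPart_inf_negPart_eq_zero x)
  have h0' : A.mul x⁻ x⁺ = 0 := by rw [A.mul_comm']; exact h0
  have hx : x = x⁺ - x⁻ := (posPart_sub_negPart x).symm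
  have : A.mul x x = A.mul x⁺ x⁺ + A.mul x⁻ x⁻ := by
    conv_lhs => rw [hx]
    simp only [map_sub, LinearMap.sub_apply]
    rw [h0, h0']
    abel
  rw [this]
  exact add_nonneg (A.mul_pos' _ _ (posPart_nonneg x) (posPart_nonneg x))
    (A.mul_pos' _ _ (negPart_nonneg x) (negPart_nonneg x))

lemma wm_mul_smul_e (A : CEPS E) (c : ℝ) (x : E) : A.mul ((c : ℝ) • A.e) x = c • x := by
  rw [map_smul, LinearMap.smul_apply, A.one_mul']

lemma wm_smul_e_nonneg (A : CEPS E) {r : ℝ} (hr : 0 ≤ r) : 0 ≤ r • A.e := by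
  have h : A.mul (Real.sqrt r • A.e) (Real.sqrt r • A.e) = r • A.e := by
    rw [wm_mul_smul_e, smul_smul, Real.mul_self_sqrt hr]
  rw [← h]
  exact wm_sq_nonneg A _

lemma wm_smul_nonneg (A : CEPS E) {r : ℝ} {x : E} (hr : 0 ≤ r) (hx : 0 ≤ x) : 0 ≤ r • x := by
  have h : A.mul (r • A.e) x = r • x := wm_mul_smul_e A r x
  rw [← h, A.mul_comm']
  exact A.mul_pos' x _ hx (wm_smul_e_nonneg A hr)

lemma wm_smul_mono (A : CEPS E) {r : ℝ} {x y : E} (hr : 0 ≤ r) (h : x ≤ y) : r • x ≤ r • y := by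
  have := wm_smul_nonneg A hr (sub_nonneg.2 h)
  rw [smul_sub] at this
  exact sub_nonneg.1 this

lemma wm_smul_le_smul (A : CEPS E) {r s : ℝ} {x : E} (h : r ≤ s) (hx : 0 ≤ x) : r • x ≤ s • x := by
  have := wm_smul_nonneg A (sub_nonneg.2 h) hx
  rw [sub_smul] at this
  exact sub_nonneg.1 this

lemma wm_smul_sup_zero (A : CEPS E) {r : ℝ} (hr : 0 ≤ r) (a : E) : r • (a ⊔ 0) = (r • a) ⊔ 0 := by
  rcases eq_or_lt_of_le hr with h | h
  · simp [← h]
  · have aux : ∀ (s : ℝ) (b : E), 0 ≤ s → (s • b) ⊔ 0 ≤ s • (b ⊔ 0) := fun s b hs =>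
      sup_le (wm_smul_mono A hs le_sup_left) (wm_smul_nonneg A hs le_sup_right)
    refine le_antisymm ?_ (aux r a h.le)
    have h2 := aux r⁻¹ (r • a) (inv_nonneg.2 h.le)
    rw [smul_smul, inv_mul_cancel₀ h.ne', one_smul] at h2
    have h3 := wm_smul_mono A h.le h2
    rw [smul_smul, mul_inv_cancel₀ h.ne', one_smul] at h3
    exact h3

lemma wm_abs_smul_le (A : CEPS E) {r : ℝ} (hr : 0 ≤ r) (x : E) : |r • x| ≤ r • |x| :=
  wm_abs_le (wm_smul_mono A hr (le_abs_self x))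
    (by rw [← smul_neg]; exact wm_smul_mono A hr (neg_le_abs x))

lemma wm_mul_le_mul_abs' (A : CEPS E) {p n q r : E} (hp : 0 ≤ p) (hn : 0 ≤ n) (hq : 0 ≤ q) (hr : 0 ≤ r) :
    |A.mul (p - n) (q - r)| ≤ A.mul (p + n) (q + r) := by
  have e1 : A.mul (p + n) (q + r) - A.mul (p - n) (q - r)
      = (A.mul p r + A.mul n q) + (A.mul p r + A.mul n q) := by
    simp [map_add, map_sub, LinearMap.add_apply, LinearMap.sub_apply]
    abel
  have e2 : A.mul (p + n) (q + r) + A.mul (p - n) (q - r)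
      = (A.mul p q + A.mul n r) + (A.mul p q + A.mul n r) := by
    simp [map_add, map_sub, LinearMap.add_apply, LinearMap.sub_apply]
    abel
  refine wm_abs_le ?_ ?_
  · have : 0 ≤ A.mul (p + n) (q + r) - A.mul (p - n) (q - r) := by
      rw [e1]
      have := add_nonneg (A.mul_pos' p r hp hr) (A.mul_pos' n q hn hq)
      exact add_nonneg this this
    exact sub_nonneg.1 this
  · have : 0 ≤ A.mul (p + n) (q + r) + A.mul (p - n) (q - r) := by
      rw [e2]
      have := add_nonneg (A.mul_pos' p q hp hq) (A.mul_pos' n r hn hr)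
      exact add_nonneg this this
    exact sub_nonneg.1 (by rwa [sub_neg_eq_add])

lemma wm_abs_mul_le (A : CEPS E) (a b : E) : |A.mul a b| ≤ A.mul |a| |b| := by
  have h := wm_mul_le_mul_abs' A (posPart_nonneg a) (negPart_nonneg a)
    (posPart_nonneg b) (negPart_nonneg b)
  rwa [posPart_sub_negPart, posPart_sub_negPart, posPart_add_negPart, posPart_add_negPart] at h

end Aux2

section Aux3
variable {E : Type*} [ConditionallyCompleteLattice E] [AddCommGroup E] [Module ℝ E]
  [CovariantClass E E (· + ·) (· ≤ ·)]

lemma wm_T_mono (A : CEPS E) {x y : E} (h : x ≤ y) : A.T x ≤ A.T y := by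
  have := A.T_pos (y - x) (sub_nonneg.2 h)
  rw [map_sub] at this
  exact sub_nonneg.1 this

lemma wm_abs_T_le (A : CEPS E) (x : E) : |A.T x| ≤ A.T |x| :=
  wm_abs_le (wm_T_mono A (le_abs_self x))
    (by rw [← map_neg]; exact wm_T_mono A (neg_le_abs x))

lemma wm_S_mono (A : CEPS E) {x y : E} (h : x ≤ y) : A.S x ≤ A.S y := by
  have h1 : A.S y = A.S x ⊔ A.S y := by rw [← A.S_sup, sup_eq_right.2 h]
  rw [h1]; exact le_sup_left

lemma wm_S_abs (A : CEPS E) (x : E) : A.S |x| = |A.S x| := by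
  show A.S (x ⊔ -x) = A.S x ⊔ -A.S x
  rw [A.S_sup, map_neg]

lemma wm_Sk_apply (A : CEPS E) (k : ℕ) (x : E) :
    (A.S ^ (k + 1)) x = (A.S ^ k) (A.S x) := by
  rw [pow_succ, Module.End.mul_apply]

lemma wm_Sk_e (A : CEPS E) (k : ℕ) : (A.S ^ k) A.e = A.e := by
  induction k with
  | zero => simp
  | succ k ih => rw [wm_Sk_apply, A.S_e, ih]

lemma wm_Sk_abs (A : CEPS E) (k : ℕ) (x : E) : (A.S ^ k) |x| = |(A.S ^ k) x| := by
  induction k generalizing x with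
  | zero => simp
  | succ k ih => rw [wm_Sk_apply, wm_S_abs, ih, wm_Sk_apply]

lemma wm_Sk_mono (A : CEPS E) (k : ℕ) {x y : E} (h : x ≤ y) :
    (A.S ^ k) x ≤ (A.S ^ k) y := by
  induction k generalizing x y with
  | zero => simpa using h
  | succ k ih => rw [wm_Sk_apply, wm_Sk_apply]; exact ih (wm_S_mono A h)

lemma wm_Sk_nonneg (A : CEPS E) (k : ℕ) {x : E} (h : 0 ≤ x) : 0 ≤ (A.S ^ k) x := by
  have := wm_Sk_mono A k h
  rwa [map_zero] at this

lemma wm_T_Sk (A : CEPS E) (k : ℕ) (x : E) : A.T ((A.S ^ k) x) = A.T x := by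
  induction k generalizing x with
  | zero => simp
  | succ k ih => rw [wm_Sk_apply, ih, A.TS]

/-- scaled disjointness -/
lemma wm_disj_smul (A : CEPS E) {a c : E} (ha : 0 ≤ a) (hc : 0 ≤ c) (h : a ⊓ c = 0)
    {r : ℝ} (hr : 0 ≤ r) : (r • a) ⊓ c = 0 := by
  have hnat : ∀ n : ℕ, ((n : ℝ) • a) ⊓ c = 0 := by
    intro n
    induction n with
    | zero => simp [hc]
    | succ k ih =>
      refine le_antisymm ?_ (le_inf (wm_smul_nonneg A (by positivity) ha) hc)
      have hle : ((k + 1 : ℕ) : ℝ) • a ⊓ c ≤ ((k : ℝ) • a) ⊓ c + a ⊓ c := by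
        push_cast
        rw [add_smul, one_smul]
        calc ((k : ℝ) • a + a) ⊓ c = c ⊓ ((k : ℝ) • a + a) := by rw [inf_comm]
          _ ≤ c ⊓ ((k : ℝ) • a) + c ⊓ a :=
              wm_inf_add hc (wm_smul_nonneg A (by positivity) ha) ha
          _ = ((k : ℝ) • a) ⊓ c + a ⊓ c := by rw [inf_comm c, inf_comm c]
      rw [ih, h, add_zero] at hle
      exact hle
  refine le_antisymm ?_ (le_inf (wm_smul_nonneg A hr ha) hc)
  have h1 : (r • a) ⊓ c ≤ (((⌈r⌉₊ : ℕ) : ℝ) • a) ⊓ c :=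
    inf_le_inf_right c (wm_smul_le_smul A (Nat.le_ceil r) ha)
  rw [hnat ⌈r⌉₊] at h1
  exact h1

lemma wm_bp_isLUB (A : CEPS E) (d : E) :
    IsLUB (Set.range fun n : ℕ => A.e ⊓ (n : ℝ) • d) (bandProj d A.e) :=
  isLUB_csSup ⟨_, ⟨0, rfl⟩⟩ ⟨A.e, by rintro x ⟨n, rfl⟩; exact inf_le_left⟩

lemma wm_bp_nonneg (A : CEPS E) (d : E) : 0 ≤ bandProj d A.e := by
  have h : A.e ⊓ ((0 : ℕ) : ℝ) • d ≤ bandProj d A.e := (wm_bp_isLUB A d).1 ⟨0, rfl⟩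
  rwa [Nat.cast_zero, zero_smul, inf_eq_right.2 A.e_pos.le] at h

lemma wm_bp_le_e (A : CEPS E) (d : E) : bandProj d A.e ≤ A.e :=
  (wm_bp_isLUB A d).2 (by rintro x ⟨n, rfl⟩; exact inf_le_left)

lemma wm_bp_compl_disj (A : CEPS E) {d : E} (hd : 0 ≤ d) :
    (A.e - bandProj d A.e) ⊓ d = 0 := by
  set P := bandProj d A.e with hP
  set t := (A.e - P) ⊓ d with htdef
  have ht0 : 0 ≤ t := le_inf (sub_nonneg.2 (wm_bp_le_e A d)) hd
  have htd : t ≤ d := inf_le_right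
  have key : ∀ n : ℕ, (n : ℝ) • t ≤ A.e := by
    intro n
    set m : ℝ := ((n : ℝ)) ^ 2 with hm
    have hm0 : (0 : ℝ) ≤ m := by positivity
    have hmem : A.e ⊓ m • d ≤ P := by
      have h : A.e ⊓ ((n ^ 2 : ℕ) : ℝ) • d ≤ P := (wm_bp_isLUB A d).1 ⟨n ^ 2, rfl⟩
      rwa [show ((n ^ 2 : ℕ) : ℝ) = m by push_cast [hm]; ring] at h
    have h1 : t ≤ (A.e - m • d) ⊔ 0 := by
      refine le_trans inf_le_left (le_trans (sub_le_sub_left hmem A.e) ?_)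
      rw [sub_inf, sub_self]
      exact sup_le le_sup_right le_sup_left
    have h2 : t ≤ ((A.e - m • d) ⊓ d) ⊔ 0 := by
      have := le_inf h1 htd
      refine le_trans this (le_trans (wm_inf_sup_le _ _ _) ?_)
      exact sup_le le_sup_left (le_trans inf_le_left le_sup_right)
    have h3 : (1 + m) • (((A.e - m • d) ⊓ d) ⊔ 0) ≤ A.e := by
      rw [wm_smul_sup_zero A (by positivity)]
      refine sup_le ?_ A.e_pos.le
      have : (1 + m) • ((A.e - m • d) ⊓ d) =
          ((A.e - m • d) ⊓ d) + m • ((A.e - m • d) ⊓ d) := by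
        rw [add_smul, one_smul]
      rw [this]
      calc ((A.e - m • d) ⊓ d) + m • ((A.e - m • d) ⊓ d)
          ≤ (A.e - m • d) + m • d :=
            add_le_add inf_le_left (wm_smul_mono A hm0 inf_le_right)
        _ = A.e := by abel
    calc (n : ℝ) • t ≤ (1 + m) • t :=
          wm_smul_le_smul A (by nlinarith [sq_nonneg ((n : ℝ) - 1)]) ht0
      _ ≤ (1 + m) • (((A.e - m • d) ⊓ d) ⊔ 0) := wm_smul_mono A (by positivity) h2
      _ ≤ A.e := h3
  exact le_antisymm (wm_arch ht0 key) ht0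

lemma wm_bp_disj (A : CEPS E) {d : E} (hd : 0 ≤ d) {d' : E} (h0 : 0 ≤ d')
    (h : d' ⊓ d = 0) : d' ⊓ bandProj d A.e = 0 := by
  set P := bandProj d A.e
  have ht0 : 0 ≤ d' ⊓ P := le_inf h0 (wm_bp_nonneg A d)
  have := wm_sup_disjoint (wm_bp_isLUB A d) (t := d' ⊓ P) ?_ ht0 inf_le_right
  · exact this
  · intro n
    refine le_antisymm ?_ (le_inf (le_inf A.e_pos.le (wm_smul_nonneg A (by positivity) hd)) ht0)
    calc (A.e ⊓ (n : ℝ) • d) ⊓ (d' ⊓ P)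
        ≤ ((n : ℝ) • d) ⊓ d' := inf_le_inf inf_le_right inf_le_left
      _ = d' ⊓ ((n : ℝ) • d) := by rw [inf_comm]
      _ = 0 := by
          have := wm_disj_smul A hd h0 (by rw [inf_comm]; exact h) (r := (n : ℝ)) (by positivity)
          rwa [inf_comm] at this

lemma wm_bp_component (A : CEPS E) {d : E} (hd : 0 ≤ d) :
    IsComponent A.e (bandProj d A.e) := by
  set P := bandProj d A.e with hPdef
  refine ⟨wm_bp_nonneg A d, wm_bp_le_e A d, ?_⟩
  have hdisj : d ⊓ (A.e - P) = 0 := by rw [inf_comm]; exact wm_bp_compl_disj A hd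
  have ht0 : 0 ≤ P ⊓ (A.e - P) := le_inf (wm_bp_nonneg A d) (sub_nonneg.2 (wm_bp_le_e A d))
  refine wm_sup_disjoint (wm_bp_isLUB A d) (t := P ⊓ (A.e - P)) ?_ ht0 inf_le_left
  intro n
  refine le_antisymm ?_ (le_inf (le_inf A.e_pos.le (wm_smul_nonneg A (by positivity) hd)) ht0)
  calc (A.e ⊓ (n : ℝ) • d) ⊓ (P ⊓ (A.e - P))
      ≤ ((n : ℝ) • d) ⊓ (A.e - P) := inf_le_inf inf_le_right inf_le_right
    _ = 0 := wm_disj_smul A hd (sub_nonneg.2 (wm_bp_le_e A d)) hdisj (by positivity)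

lemma wm_component_diff (A : CEPS E) {p q : E} (hp : IsComponent A.e p)
    (hq : IsComponent A.e q) (h : q ≤ p) : IsComponent A.e (p - q) := by
  obtain ⟨hp0, hpe, hpc⟩ := hp
  obtain ⟨hq0, hqe, hqc⟩ := hq
  refine ⟨sub_nonneg.2 h, le_trans (sub_le_self _ hq0) hpe, ?_⟩
  have h1 : (p - q) ⊓ (A.e - p) = 0 := by
    refine le_antisymm ?_ (le_inf (sub_nonneg.2 h) (sub_nonneg.2 hpe))
    calc (p - q) ⊓ (A.e - p) ≤ p ⊓ (A.e - p) :=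
        inf_le_inf_right _ (sub_le_self _ hq0)
      _ = 0 := hpc
  have h2 : (p - q) ⊓ q = 0 := by
    refine le_antisymm ?_ (le_inf (sub_nonneg.2 h) hq0)
    calc (p - q) ⊓ q ≤ (A.e - q) ⊓ q := inf_le_inf_right _ (sub_le_sub_right hpe q)
      _ = q ⊓ (A.e - q) := by rw [inf_comm]
      _ = 0 := hqc
  have he : A.e - (p - q) = (A.e - p) + q := by abel
  rw [he]
  refine le_antisymm ?_ (le_inf (sub_nonneg.2 h)
    (by rw [← he]; exact sub_nonneg.2 (le_trans (sub_le_self _ hq0) hpe)))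
  calc (p - q) ⊓ ((A.e - p) + q)
      ≤ (p - q) ⊓ (A.e - p) + (p - q) ⊓ q :=
        wm_inf_add (sub_nonneg.2 h) (sub_nonneg.2 hpe) hq0
    _ = 0 := by rw [h1, h2, add_zero]

end Aux3

section Aux4
variable {E : Type*} [ConditionallyCompleteLattice E] [AddCommGroup E] [Module ℝ E]
  [CovariantClass E E (· + ·) (· ≤ ·)]

lemma wm_freudenthal (A : CEPS E) {f : E} (hf0 : 0 ≤ f) {K : ℕ} (hfK : f ≤ (K : ℝ) • A.e)
    (m : ℕ) :
    ∃ (L : ℕ) (q : ℕ → E) (c : ℕ → ℝ),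
      (∀ j, IsComponent A.e (q j)) ∧ (∀ j, 0 ≤ c j) ∧
      0 ≤ f - ∑ j ∈ Finset.range L, c j • q j ∧
      f - ∑ j ∈ Finset.range L, c j • q j ≤ ((1/2 : ℝ) ^ m) • A.e := by
  set ε : ℝ := (1/2 : ℝ) ^ m with hε
  have hε0 : 0 < ε := by positivity
  set L := K * 2 ^ m with hL
  have hd0 : ∀ j : ℕ, (0:E) ≤ (f - ((j : ℝ) * ε) • A.e)⁺ := fun j => posPart_nonneg _
  set P : ℕ → E := fun j => bandProj ((f - ((j : ℝ) * ε) • A.e)⁺) A.e with hP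
  have hPcomp : ∀ j, IsComponent A.e (P j) := fun j => wm_bp_component A (hd0 j)
  have hPmono : ∀ j, P (j + 1) ≤ P j := by
    intro j
    have hdm : (f - (((j+1 : ℕ) : ℝ) * ε) • A.e)⁺ ≤ (f - ((j : ℝ) * ε) • A.e)⁺ := by
      apply posPart_mono
      refine sub_le_sub_left (wm_smul_le_smul A ?_ A.e_pos.le) f
      push_cast; nlinarith [hε0.le]
    refine (wm_bp_isLUB A _).2 ?_
    rintro x ⟨n, rfl⟩
    exact le_trans (inf_le_inf_left _ (wm_smul_mono A (by positivity) hdm))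
      ((wm_bp_isLUB A _).1 ⟨n, rfl⟩)
  have hPL : P L = 0 := by
    have hLε : ((L : ℝ)) * ε = (K : ℝ) := by
      rw [hL, hε]; push_cast; rw [mul_assoc, ← mul_pow]; norm_num
    have hdL : (f - ((L : ℝ) * ε) • A.e)⁺ = 0 := by
      rw [posPart_eq_zero]
      exact sub_nonpos.2 (by rw [hLε]; exact hfK)
    show bandProj _ A.e = 0
    rw [hdL]
    have hrange : (Set.range fun n : ℕ => A.e ⊓ (n : ℝ) • (0 : E)) = {0} := by
      ext x
      simp [inf_eq_right.2 A.e_pos.le]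
    rw [bandProj, hrange, csSup_singleton]
  have hq0 : ∀ j, (0:E) ≤ P j - P (j + 1) := fun j => sub_nonneg.2 (hPmono j)
  have hlow : ∀ j : ℕ, ((j : ℝ) * ε) • (P j - P (j + 1)) ≤ A.mul f (P j - P (j + 1)) := by
    intro j
    have hneg : A.mul ((f - ((j : ℝ) * ε) • A.e)⁻) (P j - P (j + 1)) = 0 := by
      apply wm_disj_mul A (negPart_nonneg _) (hq0 j)
      have h1 : (f - ((j : ℝ) * ε) • A.e)⁻ ⊓ (f - ((j : ℝ) * ε) • A.e)⁺ = 0 := by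
        rw [inf_comm]; exact posPart_inf_negPart_eq_zero _
      have h2 : (f - ((j : ℝ) * ε) • A.e)⁻ ⊓ P j = 0 :=
        wm_bp_disj A (hd0 j) (negPart_nonneg _) h1
      refine le_antisymm ?_ (le_inf (negPart_nonneg _) (hq0 j))
      exact le_trans (inf_le_inf_left _ (sub_le_self _ (hPcomp (j+1)).1)) h2.le
    have expand : A.mul f (P j - P (j + 1)) - ((j : ℝ) * ε) • (P j - P (j + 1))
        = A.mul ((f - ((j : ℝ) * ε) • A.e)⁺) (P j - P (j + 1)) := by
      have e1 : A.mul (f - ((j : ℝ) * ε) • A.e) (P j - P (j + 1))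
          = A.mul f (P j - P (j + 1)) - ((j : ℝ) * ε) • (P j - P (j + 1)) := by
        rw [map_sub A.mul, LinearMap.sub_apply, wm_mul_smul_e]
      rw [← e1]
      conv_lhs => rw [← posPart_sub_negPart (f - ((j : ℝ) * ε) • A.e)]
      rw [map_sub A.mul, LinearMap.sub_apply, hneg, sub_zero]
    have hpos := A.mul_pos' _ _ (hd0 j) (hq0 j)
    rw [← expand] at hpos
    exact sub_nonneg.1 hpos
  have hhigh : ∀ j : ℕ, A.mul f (P j - P (j + 1)) ≤ (((j + 1 : ℕ) : ℝ) * ε) • (P j - P (j + 1)) := by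
    intro j
    have hdisj : A.mul ((f - (((j+1 : ℕ) : ℝ) * ε) • A.e)⁺) (P j - P (j + 1)) = 0 := by
      apply wm_disj_mul A (hd0 (j+1)) (hq0 j)
      have h1 : (A.e - P (j+1)) ⊓ (f - (((j+1 : ℕ) : ℝ) * ε) • A.e)⁺ = 0 :=
        wm_bp_compl_disj A (hd0 (j+1))
      have h2 : (f - (((j+1 : ℕ) : ℝ) * ε) • A.e)⁺ ⊓ (A.e - P (j+1)) = 0 := by
        rw [inf_comm]; exact h1
      refine le_antisymm ?_ (le_inf (hd0 (j+1)) (hq0 j))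
      exact le_trans (inf_le_inf_left _ (sub_le_sub_right (hPcomp j).2.1 _)) h2.le
    have e1 : A.mul (f - (((j+1 : ℕ) : ℝ) * ε) • A.e) (P j - P (j + 1))
        = A.mul f (P j - P (j + 1)) - (((j+1 : ℕ) : ℝ) * ε) • (P j - P (j + 1)) := by
      rw [map_sub A.mul, LinearMap.sub_apply, wm_mul_smul_e]
    have e2 : A.mul (f - (((j+1 : ℕ) : ℝ) * ε) • A.e) (P j - P (j + 1))
        = - A.mul ((f - (((j+1 : ℕ) : ℝ) * ε) • A.e)⁻) (P j - P (j + 1)) := by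
      conv_lhs => rw [← posPart_sub_negPart (f - (((j+1 : ℕ) : ℝ) * ε) • A.e)]
      rw [map_sub A.mul, LinearMap.sub_apply, hdisj, zero_sub]
    have e3 : A.mul f (P j - P (j + 1)) - (((j+1 : ℕ) : ℝ) * ε) • (P j - P (j + 1)) ≤ 0 := by
      rw [← e1, e2]
      simp only [neg_nonpos]
      exact A.mul_pos' _ _ (negPart_nonneg _) (hq0 j)
    exact sub_nonpos.1 e3
  have htel : f = ∑ j ∈ Finset.range L, A.mul f (P j - P (j + 1)) := by
    have hsum : ∑ j ∈ Finset.range L, (A.mul f (P j) - A.mul f (P (j + 1)))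
        = A.mul f (P 0) - A.mul f (P L) := Finset.sum_range_sub' (fun j => A.mul f (P j)) L
    have eq0 : (f - (((0:ℕ) : ℝ) * ε) • A.e)⁺ = f := by
      rw [Nat.cast_zero, zero_mul, zero_smul, sub_zero]
      exact posPart_eq_self.2 hf0
    have hP0 : A.mul f (P 0) = f := by
      have hdisj0 : f ⊓ (A.e - P 0) = 0 := by
        have h1 : (A.e - P 0) ⊓ (f - (((0:ℕ) : ℝ) * ε) • A.e)⁺ = 0 := wm_bp_compl_disj A (hd0 0)
        rw [eq0] at h1
        rw [inf_comm]; exact h1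
      have hz : A.mul f (A.e - P 0) = 0 :=
        wm_disj_mul A hf0 (sub_nonneg.2 (hPcomp 0).2.1) hdisj0
      have h2 : A.mul f (A.e - P 0) = f - A.mul f (P 0) := by
        rw [map_sub, wm_mul_e]
      rw [h2] at hz
      have := sub_eq_zero.1 hz
      exact this.symm
    have hPL0 : A.mul f (P L) = 0 := by rw [hPL, map_zero]
    calc f = A.mul f (P 0) - A.mul f (P L) := by rw [hP0, hPL0, sub_zero]
      _ = ∑ j ∈ Finset.range L, (A.mul f (P j) - A.mul f (P (j + 1))) := hsum.symm
      _ = ∑ j ∈ Finset.range L, A.mul f (P j - P (j + 1)) := by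
          refine Finset.sum_congr rfl fun j _ => ?_
          rw [map_sub]
  have hkey : f - ∑ j ∈ Finset.range L, ((j : ℝ) * ε) • (P j - P (j + 1))
      = ∑ j ∈ Finset.range L, (A.mul f (P j - P (j + 1)) - ((j : ℝ) * ε) • (P j - P (j + 1))) := by
    rw [Finset.sum_sub_distrib, ← htel]
  refine ⟨L, fun j => P j - P (j + 1), fun j => (j : ℝ) * ε,
    fun j => wm_component_diff A (hPcomp j) (hPcomp (j + 1)) (hPmono j),
    fun j => by positivity, ?_, ?_⟩
  · rw [hkey]
    exact wm_sum_nonneg fun j _ => sub_nonneg.2 (hlow j)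
  · rw [hkey]
    calc ∑ j ∈ Finset.range L, (A.mul f (P j - P (j + 1)) - ((j : ℝ) * ε) • (P j - P (j + 1)))
        ≤ ∑ j ∈ Finset.range L, ε • (P j - P (j + 1)) := by
          refine wm_sum_le_sum fun j _ => ?_
          have h2 : (((j + 1 : ℕ) : ℝ) * ε) • (P j - P (j + 1))
              - ((j : ℝ) * ε) • (P j - P (j + 1)) = ε • (P j - P (j + 1)) := by
            rw [← sub_smul]
            congr 1
            push_cast; ring
          rw [← h2]
          exact sub_le_sub_right (hhigh j) _
      _ = ε • ∑ j ∈ Finset.range L, (P j - P (j + 1)) := (Finset.smul_sum).symm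
      _ = ε • (P 0 - P L) := by rw [Finset.sum_range_sub' P L]
      _ = ε • P 0 := by rw [hPL, sub_zero]
      _ ≤ ε • A.e := wm_smul_mono A hε0.le (hPcomp 0).2.1

end Aux4

section Aux5
variable {E : Type*} [ConditionallyCompleteLattice E] [AddCommGroup E] [Module ℝ E]
  [CovariantClass E E (· + ·) (· ≤ ·)]

lemma wm_oct_zero : OrderConvergesTo (fun _ : ℕ => (0 : E)) 0 := by
  refine ⟨fun _ => 0, fun _ _ _ => le_rfl, ?_, fun m => ⟨0, fun n _ => by simp⟩⟩
  constructor
  · rintro x ⟨m, rfl⟩; exact le_rfl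
  · intro b hb; exact hb ⟨0, rfl⟩

lemma wm_oct_add {f g : ℕ → E} (hf : OrderConvergesTo f 0) (hg : OrderConvergesTo g 0) :
    OrderConvergesTo (fun n => f n + g n) 0 := by
  obtain ⟨u, hu, hug, hut⟩ := hf
  obtain ⟨v, hv, hvg, hvt⟩ := hg
  refine ⟨fun m => u m + v m, fun i j hij => add_le_add (hu hij) (hv hij), ⟨?_, ?_⟩, ?_⟩
  · rintro x ⟨m, rfl⟩
    exact add_nonneg (hug.1 ⟨m, rfl⟩) (hvg.1 ⟨m, rfl⟩)
  · intro b hb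
    have hbu : ∀ m, b ≤ u m := by
      intro m
      have hlb : ∀ j, b - u m ≤ v j := by
        intro j
        rcases le_total m j with h | h
        · have h1 : b ≤ u j + v j := hb ⟨j, rfl⟩
          have h2 : u j + v j ≤ u m + v j := add_le_add_left (hu h) _
          exact sub_le_iff_le_add'.2 (h1.trans h2)
        · have h1 : b ≤ u m + v m := hb ⟨m, rfl⟩
          have h2 : u m + v m ≤ u m + v j := add_le_add_right (hv h) _
          exact sub_le_iff_le_add'.2 (h1.trans h2)
      have : b - u m ≤ 0 := hvg.2 (by rintro x ⟨j, rfl⟩; exact hlb j)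
      exact sub_nonpos.1 this
    exact hug.2 (by rintro x ⟨m, rfl⟩; exact hbu m)
  · intro m
    obtain ⟨N1, h1⟩ := hut m
    obtain ⟨N2, h2⟩ := hvt m
    refine ⟨max N1 N2, fun n hn => ?_⟩
    have e1 : f n + g n - 0 = (f n - 0) + (g n - 0) := by abel
    rw [e1]
    exact (wm_abs_add _ _).trans
      (add_le_add (h1 n (le_trans (le_max_left _ _) hn)) (h2 n (le_trans (le_max_right _ _) hn)))

lemma wm_oct_smul (A : CEPS E) {f : ℕ → E} (hf : OrderConvergesTo f 0) {c : ℝ} (hc : 0 ≤ c) :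
    OrderConvergesTo (fun n => c • f n) 0 := by
  obtain ⟨u, hu, hug, hut⟩ := hf
  refine ⟨fun m => c • u m, fun i j hij => wm_smul_mono A hc (hu hij), ⟨?_, ?_⟩, ?_⟩
  · rintro x ⟨m, rfl⟩
    exact wm_smul_nonneg A hc (hug.1 ⟨m, rfl⟩)
  · intro b hb
    rcases eq_or_lt_of_le hc with h | h
    · have := hb ⟨0, rfl⟩
      simpa [← h] using this
    · have hbu : ∀ m, c⁻¹ • b ≤ u m := by
        intro m
        have h1 : b ≤ c • u m := hb ⟨m, rfl⟩
        have h2 := wm_smul_mono A (inv_nonneg.2 h.le) h1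
        rwa [smul_smul, inv_mul_cancel₀ h.ne', one_smul] at h2
      have h3 : c⁻¹ • b ≤ 0 := hug.2 (by rintro x ⟨m, rfl⟩; exact hbu m)
      have h4 := wm_smul_mono A h.le h3
      rwa [smul_smul, mul_inv_cancel₀ h.ne', one_smul, smul_zero] at h4
  · intro m
    obtain ⟨N, hN⟩ := hut m
    refine ⟨N, fun n hn => ?_⟩
    rw [sub_zero]
    calc |c • f n| ≤ c • |f n| := wm_abs_smul_le A hc _
      _ ≤ c • u m := wm_smul_mono A hc (by simpa using hN n hn)

lemma wm_oct_squeeze {h g : ℕ → E} (hpos : ∀ n, 0 ≤ h n) (hle : ∀ n, h n ≤ g n)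
    (hg : OrderConvergesTo g 0) : OrderConvergesTo h 0 := by
  obtain ⟨u, hu, hug, hut⟩ := hg
  refine ⟨u, hu, hug, fun m => ?_⟩
  obtain ⟨N, hN⟩ := hut m
  refine ⟨N, fun n hn => ?_⟩
  rw [sub_zero, abs_of_nonneg (hpos n)]
  exact (hle n).trans ((le_abs_self _).trans (by simpa using hN n hn))

lemma wm_oct_sum (A : CEPS E) {ι : Type*} (s : Finset ι) (F : ι → ℕ → E)
    (h : ∀ i ∈ s, OrderConvergesTo (F i) 0) :
    OrderConvergesTo (fun n => ∑ i ∈ s, F i n) 0 := by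
  classical
  induction s using Finset.induction with
  | empty => simpa using wm_oct_zero
  | @insert a s hns ih =>
    have : OrderConvergesTo (fun n => F a n + ∑ i ∈ s, F i n) 0 :=
      wm_oct_add (h a (Finset.mem_insert_self a s))
        (ih fun i hi => h i (Finset.mem_insert_of_mem hi))
    refine ⟨this.choose, this.choose_spec.1, this.choose_spec.2.1, fun m => ?_⟩
    obtain ⟨N, hN⟩ := this.choose_spec.2.2 m
    refine ⟨N, fun n hn => ?_⟩
    simpa [Finset.sum_insert hns] using hN n hn

lemma wm_oct_diag (A : CEPS E) {h : ℕ → E} (hpos : ∀ n, 0 ≤ h n) {W : E} (hW : 0 ≤ W)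
    (key : ∀ m : ℕ, ∃ H : ℕ → E, OrderConvergesTo H 0 ∧
      ∀ n, h n ≤ H n + ((1/2 : ℝ) ^ m) • W) :
    OrderConvergesTo h 0 := by
  obtain ⟨H0, ⟨u0, hu0a, hu0g, hu0t⟩, hH0le⟩ := key 0
  obtain ⟨N0, hN0⟩ := hu0t 0
  have hbd : ∀ n, N0 ≤ n → h n ≤ u0 0 + W := by
    intro n hn
    refine (hH0le n).trans (add_le_add ?_ ?_)
    · exact (le_abs_self _).trans (by simpa using hN0 n hn)
    · simp
  have hbddj : ∀ j : ℕ, BddAbove (h '' Set.Ici (N0 + j)) := by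
    intro j
    refine ⟨u0 0 + W, ?_⟩
    rintro x ⟨n, hn, rfl⟩
    exact hbd n (le_trans (Nat.le_add_right _ _) hn)
  have hne : ∀ j : ℕ, (h '' Set.Ici (N0 + j)).Nonempty :=
    fun j => ⟨h (N0 + j), ⟨N0 + j, Set.mem_Ici.2 le_rfl, rfl⟩⟩
  set u : ℕ → E := fun j => sSup (h '' Set.Ici (N0 + j)) with hu
  have hmem_le : ∀ j n, N0 + j ≤ n → h n ≤ u j :=
    fun j n hn => le_csSup (hbddj j) ⟨n, Set.mem_Ici.2 hn, rfl⟩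
  have hu_pos : ∀ j, 0 ≤ u j := fun j => (hpos _).trans (hmem_le j (N0 + j) le_rfl)
  have hua : Antitone u := by
    intro i j hij
    exact csSup_le_csSup (hbddj i) (hne j)
      (Set.image_mono (Set.Ici_subset_Ici.2 (by omega)))
  refine ⟨u, hua, ⟨?_, ?_⟩, fun j => ⟨N0 + j, fun n hn => ?_⟩⟩
  · rintro x ⟨j, rfl⟩; exact hu_pos j
  · intro b hb
    set b' := b ⊔ 0 with hb'
    have hb'lb : ∀ j, b' ≤ u j := fun j => sup_le (hb ⟨j, rfl⟩) (hu_pos j)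
    have hb'W : ∀ m : ℕ, b' ≤ ((1/2 : ℝ) ^ m) • W := by
      intro m
      obtain ⟨H, ⟨v, hva, hvg, hvt⟩, hHle⟩ := key m
      have hlb : ∀ i, b' - ((1/2 : ℝ) ^ m) • W ≤ v i := by
        intro i
        obtain ⟨N, hN⟩ := hvt i
        have hsup : u N ≤ v i + ((1/2 : ℝ) ^ m) • W := by
          refine csSup_le (hne N) ?_
          rintro x ⟨n, hn, rfl⟩
          refine (hHle n).trans (add_le_add ?_ le_rfl)
          exact (le_abs_self _).trans
            (by simpa using hN n (le_trans (Nat.le_add_left _ _) hn))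
        exact sub_le_iff_le_add.2 ((hb'lb N).trans hsup)
      have h0 : b' - ((1/2 : ℝ) ^ m) • W ≤ 0 :=
        hvg.2 (by rintro x ⟨i, rfl⟩; exact hlb i)
      exact sub_nonpos.1 h0
    have hb'0 : (0 : E) ≤ b' := le_sup_right
    have harch : ∀ n : ℕ, (n : ℝ) • b' ≤ W := by
      intro n
      have h2 : ((2:ℝ) ^ n) • b' ≤ ((2:ℝ) ^ n) • (((1/2 : ℝ) ^ n) • W) :=
        wm_smul_mono A (by positivity) (hb'W n)
      rw [smul_smul, ← mul_pow] at h2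
      norm_num at h2
      calc (n : ℝ) • b' ≤ ((2 : ℝ) ^ n) • b' :=
            wm_smul_le_smul A (by exact_mod_cast (Nat.lt_two_pow_self (n := n)).le) hb'0
        _ ≤ W := h2
    have hfin := wm_arch hb'0 harch
    exact le_trans le_sup_left hfin
  · rw [sub_zero, abs_of_nonneg (hpos n)]
    exact hmem_le j n hn

end Aux5

section Aux6
variable {E : Type*} [ConditionallyCompleteLattice E] [AddCommGroup E] [Module ℝ E]
  [CovariantClass E E (· + ·) (· ≤ ·)]

noncomputable def wmPhi (A : CEPS E) (k : ℕ) (x y : E) : E :=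
  A.T (A.mul ((A.S ^ k) x) y) - A.mul (A.T x) (A.T y)

noncomputable def wmPhiL (A : CEPS E) (k : ℕ) (y : E) : E →ₗ[ℝ] E :=
  (A.T.comp ((A.mul.flip y).comp (A.S ^ k))) - ((A.mul.flip (A.T y)).comp A.T)

lemma wmPhiL_apply (A : CEPS E) (k : ℕ) (y x : E) : wmPhiL A k y x = wmPhi A k x y := by
  simp [wmPhiL, wmPhi, LinearMap.sub_apply, LinearMap.comp_apply, LinearMap.flip_apply]

noncomputable def wmPhiR (A : CEPS E) (k : ℕ) (x : E) : E →ₗ[ℝ] E :=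
  (A.T.comp (A.mul ((A.S ^ k) x))) - ((A.mul (A.T x)).comp A.T)

lemma wmPhiR_apply (A : CEPS E) (k : ℕ) (x y : E) : wmPhiR A k x y = wmPhi A k x y := by
  simp [wmPhiR, wmPhi, LinearMap.sub_apply, LinearMap.comp_apply]

lemma wm_phi_abs_le (A : CEPS E) (k : ℕ) (x y : E) :
    |wmPhi A k x y| ≤ A.T (A.mul ((A.S ^ k) |x|) |y|) + A.mul (A.T |x|) (A.T |y|) := by
  refine (wm_abs_sub _ _).trans (add_le_add ?_ ?_)
  · calc |A.T (A.mul ((A.S ^ k) x) y)| ≤ A.T |A.mul ((A.S ^ k) x) y| := wm_abs_T_le A _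
      _ ≤ A.T (A.mul |(A.S ^ k) x| |y|) := wm_T_mono A (wm_abs_mul_le A _ _)
      _ = A.T (A.mul ((A.S ^ k) |x|) |y|) := by rw [wm_Sk_abs]
  · calc |A.mul (A.T x) (A.T y)| ≤ A.mul |A.T x| |A.T y| := wm_abs_mul_le A _ _
      _ ≤ A.mul |A.T x| (A.T |y|) :=
          wm_mul_mono_right A _ (abs_nonneg _) (wm_abs_T_le A y)
      _ ≤ A.mul (A.T |x|) (A.T |y|) :=
          wm_mul_mono_left A _ (A.T_pos _ (abs_nonneg _)) (wm_abs_T_le A x)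

lemma wm_phi_err (A : CEPS E) (k : ℕ) {x y : E} {ε : ℝ} (hε : 0 ≤ ε)
    (hx : |x| ≤ ε • A.e) (hy0 : 0 ≤ y) :
    |wmPhi A k x y| ≤ ε • (A.T y + A.T y) := by
  refine (wm_phi_abs_le A k x y).trans ?_
  have habs_y : |y| = y := abs_of_nonneg hy0
  rw [habs_y]
  have h1 : A.T (A.mul ((A.S ^ k) |x|) y) ≤ ε • A.T y := by
    have hs : (A.S ^ k) |x| ≤ ε • A.e := by
      have := wm_Sk_mono A k hx
      rwa [map_smul, wm_Sk_e] at this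
    have hmul : A.mul ((A.S ^ k) |x|) y ≤ A.mul (ε • A.e) y :=
      wm_mul_mono_left A _ hy0 hs
    rw [wm_mul_smul_e] at hmul
    exact (wm_T_mono A hmul).trans_eq (map_smul A.T ε y)
  have h2 : A.mul (A.T |x|) (A.T y) ≤ ε • A.T y := by
    have hTx : A.T |x| ≤ ε • A.e := by
      have := wm_T_mono A hx
      rwa [map_smul, A.T_e] at this
    have hmul : A.mul (A.T |x|) (A.T y) ≤ A.mul (ε • A.e) (A.T y) :=
      wm_mul_mono_left A _ (A.T_pos _ hy0) hTx
    rw [wm_mul_smul_e] at hmul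
    exact hmul
  exact (add_le_add h1 h2).trans_eq (smul_add ε _ _).symm

lemma wm_phi_err2 (A : CEPS E) (k : ℕ) {x y : E} {ε : ℝ} (hε : 0 ≤ ε)
    (hx0 : 0 ≤ x) (hy : |y| ≤ ε • A.e) :
    |wmPhi A k x y| ≤ ε • (A.T x + A.T x) := by
  refine (wm_phi_abs_le A k x y).trans ?_
  have habs_x : |x| = x := abs_of_nonneg hx0
  have h1 : A.T (A.mul ((A.S ^ k) |x|) |y|) ≤ ε • A.T x := by
    rw [habs_x]
    have hS0 : 0 ≤ (A.S ^ k) x := wm_Sk_nonneg A k hx0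
    have hmul : A.mul ((A.S ^ k) x) |y| ≤ A.mul ((A.S ^ k) x) (ε • A.e) :=
      wm_mul_mono_right A _ hS0 hy
    have he : A.mul ((A.S ^ k) x) (ε • A.e) = ε • (A.S ^ k) x := by
      rw [A.mul_comm', wm_mul_smul_e]
    rw [he] at hmul
    refine (wm_T_mono A hmul).trans_eq ?_
    rw [map_smul, wm_T_Sk]
  have h2 : A.mul (A.T |x|) (A.T |y|) ≤ ε • A.T x := by
    rw [habs_x]
    have hTy : A.T |y| ≤ ε • A.e := by
      have := wm_T_mono A hy
      rwa [map_smul, A.T_e] at this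
    have hmul := wm_mul_mono_right A (A.T x) (A.T_pos _ hx0) hTy
    rwa [A.mul_comm' (A.T x) (ε • A.e), wm_mul_smul_e] at hmul
  exact (add_le_add h1 h2).trans_eq (smul_add ε _ _).symm

lemma wm_phi_sum (A : CEPS E) (k : ℕ) {Lf Lg : ℕ} (p q : ℕ → E) (cf cg : ℕ → ℝ) :
    wmPhi A k (∑ a ∈ Finset.range Lf, cf a • p a) (∑ b ∈ Finset.range Lg, cg b • q b)
      = ∑ a ∈ Finset.range Lf, ∑ b ∈ Finset.range Lg,
          (cf a * cg b) • wmPhi A k (p a) (q b) := by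
  rw [← wmPhiL_apply, map_sum]
  refine Finset.sum_congr rfl fun a _ => ?_
  rw [map_smul, wmPhiL_apply, ← wmPhiR_apply, map_sum, Finset.smul_sum]
  refine Finset.sum_congr rfl fun b _ => ?_
  rw [map_smul, wmPhiR_apply, smul_smul]

end Aux6

section Aux7
variable {E : Type*} [ConditionallyCompleteLattice E] [AddCommGroup E] [Module ℝ E]
  [CovariantClass E E (· + ·) (· ≤ ·)]

lemma wm_main_pos (A : CEPS E) (hwm : A.WeakMixing) {f g : E}
    (hf0 : 0 ≤ f) {Kf : ℕ} (hfK : f ≤ (Kf : ℝ) • A.e)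
    (hg0 : 0 ≤ g) {Kg : ℕ} (hgK : g ≤ (Kg : ℝ) • A.e) :
    OrderConvergesTo (fun n => (n : ℝ)⁻¹ • ∑ k ∈ Finset.range n, |wmPhi A k f g|) 0 := by
  set W : E := (A.T f + A.T f) + (A.T g + A.T g) with hWdef
  have hW0 : 0 ≤ W :=
    add_nonneg (add_nonneg (A.T_pos f hf0) (A.T_pos f hf0))
      (add_nonneg (A.T_pos g hg0) (A.T_pos g hg0))
  have hpos : ∀ n : ℕ, (0:E) ≤ (n : ℝ)⁻¹ • ∑ k ∈ Finset.range n, |wmPhi A k f g| :=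
    fun n => wm_smul_nonneg A (by positivity) (wm_sum_nonneg fun k _ => abs_nonneg _)
  refine wm_oct_diag A hpos hW0 ?_
  intro m
  obtain ⟨Lf, p, cf, hpcomp, hcf0, hfml, hfmu⟩ := wm_freudenthal A hf0 hfK m
  obtain ⟨Lg, q, cg, hqcomp, hcg0, hgml, hgmu⟩ := wm_freudenthal A hg0 hgK m
  set ε : ℝ := (1/2 : ℝ) ^ m with hε
  have hε0 : (0:ℝ) ≤ ε := by positivity
  set fm := ∑ a ∈ Finset.range Lf, cf a • p a with hfm
  set gm := ∑ b ∈ Finset.range Lg, cg b • q b with hgm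
  have hfm0 : 0 ≤ fm := wm_sum_nonneg fun a _ => wm_smul_nonneg A (hcf0 a) (hpcomp a).1
  have hfmf : fm ≤ f := by
    have := hfml
    rw [sub_nonneg] at this
    exact this
  have hptwise : ∀ k : ℕ, |wmPhi A k f g| ≤
      (∑ a ∈ Finset.range Lf, ∑ b ∈ Finset.range Lg,
        (cf a * cg b) • |wmPhi A k (p a) (q b)|) + ε • W := by
    intro k
    have e1 : ∀ y, wmPhi A k (f - fm) y = wmPhi A k f y - wmPhi A k fm y := by
      intro y
      have h := map_sub (wmPhiL A k y) f fm
      rwa [wmPhiL_apply, wmPhiL_apply, wmPhiL_apply] at h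
    have e2 : ∀ x, wmPhi A k x (g - gm) = wmPhi A k x g - wmPhi A k x gm := by
      intro x
      have h := map_sub (wmPhiR A k x) g gm
      rwa [wmPhiR_apply, wmPhiR_apply, wmPhiR_apply] at h
    have hdecomp : wmPhi A k f g
        = wmPhi A k fm gm + wmPhi A k (f - fm) g + wmPhi A k fm (g - gm) := by
      rw [e1 g, e2 fm]
      abel
    have herr1 : |wmPhi A k (f - fm) g| ≤ ε • (A.T g + A.T g) := by
      refine wm_phi_err A k hε0 ?_ hg0
      rw [abs_of_nonneg hfml]
      exact hfmu
    have herr2 : |wmPhi A k fm (g - gm)| ≤ ε • (A.T f + A.T f) := by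
      refine le_trans (wm_phi_err2 A k hε0 hfm0 ?_) ?_
      · rw [abs_of_nonneg hgml]
        exact hgmu
      · exact wm_smul_mono A hε0 (add_le_add (wm_T_mono A hfmf) (wm_T_mono A hfmf))
    have hsum : |wmPhi A k fm gm| ≤ ∑ a ∈ Finset.range Lf, ∑ b ∈ Finset.range Lg,
        (cf a * cg b) • |wmPhi A k (p a) (q b)| := by
      rw [hfm, hgm, wm_phi_sum A k p q cf cg]
      refine (wm_abs_sum_le _ _).trans (wm_sum_le_sum fun a _ => ?_)
      refine (wm_abs_sum_le _ _).trans (wm_sum_le_sum fun b _ => ?_)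
      exact wm_abs_smul_le A (mul_nonneg (hcf0 a) (hcg0 b)) _
    calc |wmPhi A k f g|
        ≤ |wmPhi A k fm gm| + (|wmPhi A k (f - fm) g| + |wmPhi A k fm (g - gm)|) := by
          rw [hdecomp]
          exact (wm_abs_add _ _).trans
            (le_trans (add_le_add (wm_abs_add _ _) le_rfl) (by rw [add_assoc]))
      _ ≤ (∑ a ∈ Finset.range Lf, ∑ b ∈ Finset.range Lg,
            (cf a * cg b) • |wmPhi A k (p a) (q b)|)
          + (ε • (A.T g + A.T g) + ε • (A.T f + A.T f)) :=
          add_le_add hsum (add_le_add herr1 herr2)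
      _ = (∑ a ∈ Finset.range Lf, ∑ b ∈ Finset.range Lg,
            (cf a * cg b) • |wmPhi A k (p a) (q b)|) + ε • W := by
          rw [hWdef, ← smul_add]
          congr 2
          abel
  refine ⟨fun n => ∑ ab ∈ (Finset.range Lf) ×ˢ (Finset.range Lg),
    (cf ab.1 * cg ab.2) • ((n : ℝ)⁻¹ • ∑ k ∈ Finset.range n, |wmPhi A k (p ab.1) (q ab.2)|),
    ?_, ?_⟩
  · refine wm_oct_sum A _ _ ?_
    rintro ⟨a, b⟩ _
    refine wm_oct_smul A ?_ (mul_nonneg (hcf0 a) (hcg0 b))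
    exact hwm (p a) (q b) (hpcomp a) (hqcomp b)
  · intro n
    rcases Nat.eq_zero_or_pos n with hn | hn
    · subst hn
      simp only [Finset.range_zero, Finset.sum_empty, smul_zero, Finset.sum_const_zero, zero_add]
      exact wm_smul_nonneg A hε0 hW0
    · have step1 : (n : ℝ)⁻¹ • ∑ k ∈ Finset.range n, |wmPhi A k f g| ≤
          (n : ℝ)⁻¹ • ∑ k ∈ Finset.range n,
            ((∑ a ∈ Finset.range Lf, ∑ b ∈ Finset.range Lg,
              (cf a * cg b) • |wmPhi A k (p a) (q b)|) + ε • W) :=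
        wm_smul_mono A (by positivity) (wm_sum_le_sum fun k _ => hptwise k)
      refine step1.trans_eq ?_
      rw [Finset.sum_add_distrib, smul_add]
      congr 1
      · calc (n : ℝ)⁻¹ • ∑ k ∈ Finset.range n, ∑ a ∈ Finset.range Lf,
              ∑ b ∈ Finset.range Lg, (cf a * cg b) • |wmPhi A k (p a) (q b)|
            = (n : ℝ)⁻¹ • ∑ k ∈ Finset.range n,
                ∑ ab ∈ (Finset.range Lf) ×ˢ (Finset.range Lg),
                  (cf ab.1 * cg ab.2) • |wmPhi A k (p ab.1) (q ab.2)| := by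
              congr 1
              exact Finset.sum_congr rfl fun k _ => (Finset.sum_product
                (s := Finset.range Lf) (t := Finset.range Lg)
                (f := fun ab => (cf ab.1 * cg ab.2) • |wmPhi A k (p ab.1) (q ab.2)|)).symm
          _ = (n : ℝ)⁻¹ • ∑ ab ∈ (Finset.range Lf) ×ˢ (Finset.range Lg),
                ∑ k ∈ Finset.range n,
                  (cf ab.1 * cg ab.2) • |wmPhi A k (p ab.1) (q ab.2)| := by
              rw [Finset.sum_comm]
          _ = ∑ ab ∈ (Finset.range Lf) ×ˢ (Finset.range Lg),
                (n : ℝ)⁻¹ • ∑ k ∈ Finset.range n,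
                  (cf ab.1 * cg ab.2) • |wmPhi A k (p ab.1) (q ab.2)| := Finset.smul_sum
          _ = ∑ ab ∈ (Finset.range Lf) ×ˢ (Finset.range Lg),
                (cf ab.1 * cg ab.2) •
                  ((n : ℝ)⁻¹ • ∑ k ∈ Finset.range n, |wmPhi A k (p ab.1) (q ab.2)|) := by
              refine Finset.sum_congr rfl fun ab _ => ?_
              rw [← Finset.smul_sum, smul_comm]
      · rw [Finset.sum_const, Finset.card_range, ← Nat.cast_smul_eq_nsmul ℝ n (ε • W),
          smul_smul, inv_mul_cancel₀ (by exact_mod_cast hn.ne'), one_smul]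

end Aux7


/-- a conditional expectation preserving system is conditionally weak
mixing iff `(1/n)·∑_{k<n} |T((S^k f)·g) − Tf·Tg| → 0` in order for all `f, g` in the
ideal `E_e` generated by `e`. -/
theorem weakMixing_iff_ideal
    {E : Type*} [ConditionallyCompleteLattice E] [AddCommGroup E] [Module ℝ E]
    [CovariantClass E E (· + ·) (· ≤ ·)]
    (A : CEPS E) :
    A.WeakMixing ↔
      ∀ f g : E, (∃ k : ℝ, |f| ≤ k • A.e) → (∃ k : ℝ, |g| ≤ k • A.e) →
        OrderConvergesTo
          (fun n => (n : ℝ)⁻¹ • ∑ k ∈ Finset.range n,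
            |A.T (A.mul ((A.S ^ k) f) g) - A.mul (A.T f) (A.T g)|) (0 : E) := by
  constructor
  · intro hwm f g hf hg
    obtain ⟨kf, hkf⟩ := hf
    obtain ⟨kg, hkg⟩ := hg
    have hkf' : |f| ≤ ((⌈kf⌉₊ : ℕ) : ℝ) • A.e :=
      hkf.trans (wm_smul_le_smul A (Nat.le_ceil kf) A.e_pos.le)
    have hkg' : |g| ≤ ((⌈kg⌉₊ : ℕ) : ℝ) • A.e :=
      hkg.trans (wm_smul_le_smul A (Nat.le_ceil kg) A.e_pos.le)
    have hposle : ∀ x : E, x⁺ ≤ |x| := fun x => by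
      rw [posPart_def]
      exact sup_le (le_abs_self x) (abs_nonneg x)
    have hnegle : ∀ x : E, x⁻ ≤ |x| := fun x => by
      rw [negPart_def]
      exact sup_le (neg_le_abs x) (abs_nonneg x)
    have hfp := (hposle f).trans hkf'
    have hfn := (hnegle f).trans hkf'
    have hgp := (hposle g).trans hkg'
    have hgn := (hnegle g).trans hkg'
    have o1 := wm_main_pos A hwm (posPart_nonneg f) hfp (posPart_nonneg g) hgp
    have o2 := wm_main_pos A hwm (posPart_nonneg f) hfp (negPart_nonneg g) hgn
    have o3 := wm_main_pos A hwm (negPart_nonneg f) hfn (posPart_nonneg g) hgp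
    have o4 := wm_main_pos A hwm (negPart_nonneg f) hfn (negPart_nonneg g) hgn
    have hsum := wm_oct_add (wm_oct_add (wm_oct_add o1 o2) o3) o4
    have habs4 : ∀ k : ℕ, |wmPhi A k f g| ≤
        ((|wmPhi A k f⁺ g⁺| + |wmPhi A k f⁺ g⁻|) + |wmPhi A k f⁻ g⁺|) + |wmPhi A k f⁻ g⁻| := by
      intro k
      have e1 : ∀ y, wmPhi A k f y = wmPhi A k f⁺ y - wmPhi A k f⁻ y := by
        intro y
        have h := map_sub (wmPhiL A k y) f⁺ f⁻
        rw [posPart_sub_negPart] at h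
        rwa [wmPhiL_apply, wmPhiL_apply, wmPhiL_apply] at h
      have e2 : ∀ x, wmPhi A k x g = wmPhi A k x g⁺ - wmPhi A k x g⁻ := by
        intro x
        have h := map_sub (wmPhiR A k x) g⁺ g⁻
        rw [posPart_sub_negPart] at h
        rwa [wmPhiR_apply, wmPhiR_apply, wmPhiR_apply] at h
      have hdec : wmPhi A k f g = ((wmPhi A k f⁺ g⁺ - wmPhi A k f⁺ g⁻)
          - wmPhi A k f⁻ g⁺) + wmPhi A k f⁻ g⁻ := by
        rw [e1 g, e2 f⁺, e2 f⁻]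
        abel
      rw [hdec]
      refine (wm_abs_add _ _).trans (add_le_add ?_ le_rfl)
      refine (wm_abs_sub _ _).trans (add_le_add ?_ le_rfl)
      exact wm_abs_sub _ _
    have hle : ∀ n : ℕ, (n : ℝ)⁻¹ • ∑ k ∈ Finset.range n, |wmPhi A k f g| ≤
        (((fun n : ℕ => (n : ℝ)⁻¹ • ∑ k ∈ Finset.range n, |wmPhi A k f⁺ g⁺|) n
          + (fun n : ℕ => (n : ℝ)⁻¹ • ∑ k ∈ Finset.range n, |wmPhi A k f⁺ g⁻|) n)
          + (fun n : ℕ => (n : ℝ)⁻¹ • ∑ k ∈ Finset.range n, |wmPhi A k f⁻ g⁺|) n)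
          + (fun n : ℕ => (n : ℝ)⁻¹ • ∑ k ∈ Finset.range n, |wmPhi A k f⁻ g⁻|) n := by
      intro n
      have h1 : (n : ℝ)⁻¹ • ∑ k ∈ Finset.range n, |wmPhi A k f g| ≤
          (n : ℝ)⁻¹ • ∑ k ∈ Finset.range n,
            (((|wmPhi A k f⁺ g⁺| + |wmPhi A k f⁺ g⁻|) + |wmPhi A k f⁻ g⁺|) + |wmPhi A k f⁻ g⁻|) :=
        wm_smul_mono A (by positivity) (wm_sum_le_sum fun k _ => habs4 k)
      refine h1.trans_eq ?_
      simp only [Finset.sum_add_distrib, smul_add]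
    have hfinal : OrderConvergesTo
        (fun n => (n : ℝ)⁻¹ • ∑ k ∈ Finset.range n, |wmPhi A k f g|) 0 := by
      refine wm_oct_squeeze ?_ hle hsum
      exact fun n => wm_smul_nonneg A (by positivity) (wm_sum_nonneg fun k _ => abs_nonneg _)
    exact hfinal
  · intro hid p q hp hq
    have h1 : |p| ≤ (1 : ℝ) • A.e := by
      rw [one_smul, abs_of_nonneg hp.1]
      exact hp.2.1
    have h2 : |q| ≤ (1 : ℝ) • A.e := by
      rw [one_smul, abs_of_nonneg hq.1]
      exact hq.2.1
    exact hid p q ⟨1, h1⟩ ⟨1, h2⟩
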